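/- Let π : M → B be the smooth projection of a smooth fiber bundle, where M and B are smooth finite-dimensional real manifolds (Hausdorff and second countable). Let g : B → ℝ^k and H : M → ℝ^K be smooth maps having maximal rank on their zero sets B_g = g^{-1}(0) and M_H = H^{-1}(0), respectively (i.e., dg_y is surjective for every y ∈ B_g and dH_x is surjective for every x ∈ M_H). Then π(M_H) = B_g holds if and only if both of the following conditions hold: (i) there exist smooth functions Λ^{sS} : M → ℝ with g^s(π(x)) = Σ_{S=1}^{K} Λ^{sS}(x) H^S(x) for all x ∈ M; and (ii) for every y₀ ∈ B_g there exists x₀ ∈ M_H with π(x₀) = y₀. -/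

import Mathlib

open scoped Manifold
open Function

open scoped ContDiff

section AuxiliaryLemmas
open MeasureTheory Set

section ParInt

variable {E : Type} [NormedAddCommGroup E] [NormedSpace ℝ E] [FiniteDimensional ℝ E]

lemma hasFDerivAt_parint {F : Type} [NormedAddCommGroup F] [NormedSpace ℝ F] [CompleteSpace F]
    (φ : E → ℝ → F) (hφ : ContDiff ℝ ∞ (uncurry φ)) (x₀ : E) :
    HasFDerivAt (fun x => ∫ t, φ x t ∂(volume.restrict (Icc (0:ℝ) 1)))
      (∫ t, ((fderiv ℝ (uncurry φ) (x₀, t)).comp (ContinuousLinearMap.inl ℝ E ℝ))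
        ∂(volume.restrict (Icc (0:ℝ) 1))) x₀ := by
  have h1 : (1 : WithTop ℕ∞) ≤ ∞ := by exact_mod_cast le_top
  have hs1 : ∞ + 1 ≤ (∞ : WithTop ℕ∞) := by exact_mod_cast le_top
  set μ := volume.restrict (Icc (0:ℝ) 1) with hμ
  have hφc : Continuous (uncurry φ) := hφ.continuous
  have hφd : Differentiable ℝ (uncurry φ) := hφ.differentiable (by simp)
  set F' : E → ℝ → (E →L[ℝ] F) :=
    fun x t => (fderiv ℝ (uncurry φ) (x, t)).comp (ContinuousLinearMap.inl ℝ E ℝ) with hF'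
  have contF' : Continuous fun p : E × ℝ => (fderiv ℝ (uncurry φ) p).comp
      (ContinuousLinearMap.inl ℝ E ℝ) :=
    (hφ.fderiv_right hs1).continuous.clm_comp continuous_const
  have hasD : ∀ (x : E) (t : ℝ), HasFDerivAt (fun y => φ y t) (F' x t) x := by
    intro x t
    have h2 : HasFDerivAt (fun y : E => (y, t)) (ContinuousLinearMap.inl ℝ E ℝ) x :=
      HasFDerivAt.prodMk (hasFDerivAt_id x) (hasFDerivAt_const t x)
    exact ((hφd _).hasFDerivAt).comp x h2
  obtain ⟨C, hC⟩ : ∃ C, ∀ p ∈ (Metric.closedBall x₀ 1) ×ˢ (Icc (0:ℝ) 1),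
      ‖(fderiv ℝ (uncurry φ) p).comp (ContinuousLinearMap.inl ℝ E ℝ)‖ ≤ C :=
    ((isCompact_closedBall x₀ 1).prod isCompact_Icc).exists_bound_of_continuousOn
      contF'.continuousOn
  have key := hasFDerivAt_integral_of_dominated_loc_of_lip (μ := μ) (x₀ := x₀)
    (F := φ) (F' := F' x₀) (bound := fun _ => C) (s := Metric.ball x₀ 1) (Metric.ball_mem_nhds x₀ one_pos)
    (Filter.Eventually.of_forall fun x =>
      (hφc.comp (continuous_const.prodMk continuous_id)).aestronglyMeasurable)
    ((hφc.comp (continuous_const.prodMk continuous_id)).continuousOn.integrableOn_compact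
      isCompact_Icc)
    ((contF'.comp (continuous_const.prodMk continuous_id)).aestronglyMeasurable)
    ?_ ?_ ?_
  · exact key.2
  · refine ((ae_restrict_mem measurableSet_Icc).mono fun t ht => ?_)
    refine (convex_ball x₀ 1).lipschitzOnWith_of_nnnorm_hasFDerivWithin_le
      (fun x hx => (hasD x t).hasFDerivWithinAt) (fun x hx => ?_)
    have hb : ‖F' x t‖ ≤ C := hC (x, t) ⟨Metric.ball_subset_closedBall hx, ht⟩
    simpa [← NNReal.coe_le_coe] using hb.trans (le_abs_self C)
  · have : IsFiniteMeasure μ := by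
      constructor
      rw [hμ, Measure.restrict_apply_univ, Real.volume_Icc]
      norm_num
    exact integrable_const C
  · exact Filter.Eventually.of_forall fun t => hasD x₀ t


lemma contDiff_parint_nat :
    ∀ (n : ℕ) {F : Type} [NormedAddCommGroup F] [NormedSpace ℝ F] [CompleteSpace F]
      (φ : E → ℝ → F), ContDiff ℝ ∞ (uncurry φ) →
      ContDiff ℝ n (fun x => ∫ t, φ x t ∂(volume.restrict (Icc (0:ℝ) 1))) := by
  intro n
  induction n with
  | zero =>
    intro F _ _ _ φ hφ
    exact contDiff_zero.2 (continuous_iff_continuousAt.2 fun x =>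
      (hasFDerivAt_parint φ hφ x).continuousAt)
  | succ n ih =>
    intro F _ _ _ φ hφ
    have hs1 : ∞ + 1 ≤ (∞ : WithTop ℕ∞) := by exact_mod_cast le_top
    have hcast : ((n + 1 : ℕ) : WithTop ℕ∞) = (n : WithTop ℕ∞) + 1 := by exact_mod_cast rfl
    rw [hcast, contDiff_succ_iff_fderiv]
    refine ⟨fun x => (hasFDerivAt_parint φ hφ x).differentiableAt, ?_, ?_⟩
    · intro h
      exact absurd h (by
        intro hh
        exact (WithTop.natCast_ne_top n) (by exact_mod_cast hh))
    · have heq : (fderiv ℝ fun x => ∫ t, φ x t ∂(volume.restrict (Icc (0:ℝ) 1)))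
          = fun x => ∫ t, ((fderiv ℝ (uncurry φ) (x, t)).comp (ContinuousLinearMap.inl ℝ E ℝ))
              ∂(volume.restrict (Icc (0:ℝ) 1)) :=
        funext fun x => (hasFDerivAt_parint φ hφ x).fderiv
    
      rw [heq]
      exact ih (fun x t => (fderiv ℝ (uncurry φ) (x, t)).comp (ContinuousLinearMap.inl ℝ E ℝ))
        ((hφ.fderiv_right hs1).clm_comp contDiff_const)

lemma contDiff_parint {F : Type} [NormedAddCommGroup F] [NormedSpace ℝ F] [CompleteSpace F]
    (φ : E → ℝ → F) (hφ : ContDiff ℝ ∞ (uncurry φ)) :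
    ContDiff ℝ ∞ (fun x => ∫ t, φ x t ∂(volume.restrict (Icc (0:ℝ) 1))) :=
  contDiff_infty.2 fun n => contDiff_parint_nat n φ hφ

lemma euclidean_decomp {K : ℕ} (w : EuclideanSpace ℝ (Fin K)) :
    w = ∑ S : Fin K, w S • EuclideanSpace.single S (1:ℝ) := by
  have h := (EuclideanSpace.basisFun (Fin K) ℝ).sum_repr w
  simpa [EuclideanSpace.basisFun_repr, EuclideanSpace.basisFun_apply] using h.symm

/-- Global Hadamard-type lemma: a smooth function vanishing on the kernel of a split
surjection `D` is a smooth combination of the components of `D`. -/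
lemma hadamard_global {K : ℕ} (G : E → ℝ) (hG : ContDiff ℝ ∞ G)
    (D : E →L[ℝ] EuclideanSpace ℝ (Fin K)) (σ : EuclideanSpace ℝ (Fin K) →L[ℝ] E)
    (hσ : ∀ w, D (σ w) = w) (hvan : ∀ v, D v = 0 → G v = 0) :
    ∃ lam : Fin K → E → ℝ, (∀ S, ContDiff ℝ ∞ (lam S)) ∧
      ∀ v, G v = ∑ S : Fin K, D v S * lam S v := by
  have h1 : (1 : WithTop ℕ∞) ≤ ∞ := by exact_mod_cast le_top
  have hs1 : ∞ + 1 ≤ (∞ : WithTop ℕ∞) := by exact_mod_cast le_top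
  classical
  set ℓ : E → ℝ → E := fun v t => (v - σ (D v)) + t • σ (D v) with hℓ
  have hℓsmooth : ContDiff ℝ ∞ (uncurry ℓ) := by
    apply ContDiff.add
    · exact ((contDiff_id.sub (σ.contDiff.comp D.contDiff)).comp contDiff_fst)
    · exact contDiff_snd.smul ((σ.contDiff.comp D.contDiff).comp contDiff_fst)
  set lam : Fin K → E → ℝ := fun S v =>
    ∫ t, (fderiv ℝ G (ℓ v t)) (σ (EuclideanSpace.single S (1:ℝ)))
      ∂(volume.restrict (Icc (0:ℝ) 1)) with hlam
  have hlamsmooth : ∀ S, ContDiff ℝ ∞ (lam S) := by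
    intro S
    apply contDiff_parint
    exact (((hG.fderiv_right hs1).comp hℓsmooth).clm_apply contDiff_const)
  refine ⟨lam, hlamsmooth, fun v => ?_⟩
  set w := σ (D v) with hw
  have hline : ∀ t : ℝ, HasDerivAt (fun t : ℝ => ℓ v t) w t := by
    intro t
    have := ((hasDerivAt_id t).smul_const w).const_add (v - w)
    rw [one_smul] at this
    exact this
  have hγ : ∀ t : ℝ, HasDerivAt (fun t => G (ℓ v t)) ((fderiv ℝ G (ℓ v t)) w) t := fun t =>
    (hG.differentiable (by simp) (ℓ v t)).hasFDerivAt.comp_hasDerivAt t (hline t)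
  have contl : Continuous fun t : ℝ => ℓ v t :=
    hℓsmooth.continuous.comp (continuous_const.prodMk continuous_id)
  have contfd : Continuous fun t : ℝ => fderiv ℝ G (ℓ v t) :=
    (hG.continuous_fderiv (by simp)).comp contl
  have hftc : ∫ t in (0:ℝ)..1, (fderiv ℝ G (ℓ v t)) w = G (ℓ v 1) - G (ℓ v 0) :=
    intervalIntegral.integral_eq_sub_of_hasDerivAt (fun t _ => hγ t)
      ((contfd.clm_apply continuous_const).intervalIntegrable 0 1)
  have hl1 : ℓ v 1 = v := by simp [hℓ]
  have hl0 : G (ℓ v 0) = 0 := by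
    apply hvan
    simp [hℓ, map_sub, hσ]
  have hpt : ∀ t : ℝ, (fderiv ℝ G (ℓ v t)) w
      = ∑ S : Fin K, D v S * (fderiv ℝ G (ℓ v t)) (σ (EuclideanSpace.single S (1:ℝ))) := by
    intro t
    conv_lhs => rw [hw, euclidean_decomp (D v)]
    rw [map_sum, map_sum]
    exact Finset.sum_congr rfl fun S _ => by rw [_root_.map_smul, _root_.map_smul, smul_eq_mul]
  have hlamval : ∀ S : Fin K, lam S v
      = ∫ t in (0:ℝ)..1, (fderiv ℝ G (ℓ v t)) (σ (EuclideanSpace.single S (1:ℝ))) := by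
    intro S
    rw [intervalIntegral.integral_of_le zero_le_one]
    exact integral_Icc_eq_integral_Ioc
  have hsum : ∫ t in (0:ℝ)..1, (fderiv ℝ G (ℓ v t)) w
      = ∑ S : Fin K, D v S * lam S v := by
    rw [intervalIntegral.integral_congr (fun t _ => hpt t)]
    rw [intervalIntegral.integral_finset_sum
      (f := fun S t => D v S * (fderiv ℝ G (ℓ v t)) (σ (EuclideanSpace.single S (1:ℝ)))) (fun S _ =>
      (((continuous_const.mul (contfd.clm_apply continuous_const)).intervalIntegrable 0 1)))]
    exact Finset.sum_congr rfl fun S _ => by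
      rw [intervalIntegral.integral_const_mul, hlamval S]
  calc G v = G (ℓ v 1) - G (ℓ v 0) := by rw [hl1, hl0, sub_zero]
    _ = ∫ t in (0:ℝ)..1, (fderiv ℝ G (ℓ v t)) w := hftc.symm
    _ = ∑ S : Fin K, D v S * lam S v := hsum
lemma keyEuclid [CompleteSpace E] {K : ℕ} {V : Set E} (hV : IsOpen V)
    {h : E → EuclideanSpace ℝ (Fin K)} (hh : ContDiffOn ℝ ∞ h V)
    {f : E → ℝ} (hf : ContDiffOn ℝ ∞ f V)
    {e₀ : E} (he₀ : e₀ ∈ V) (hz : h e₀ = 0)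
    (hsurj : Surjective (fderiv ℝ h e₀))
    (hvan : ∀ e ∈ V, h e = 0 → f e = 0) :
    ∃ W : Set E, IsOpen W ∧ e₀ ∈ W ∧ W ⊆ V ∧
      ∃ lam : Fin K → E → ℝ, (∀ S, ContDiffOn ℝ ∞ (lam S) W) ∧
        ∀ e ∈ W, f e = ∑ S : Fin K, lam S e * h e S := by
  classical
  have h1 : (1 : WithTop ℕ∞) ≤ ∞ := by exact_mod_cast le_top
  have h0 : (∞ : WithTop ℕ∞) ≠ 0 := by simp
  set D : E →L[ℝ] EuclideanSpace ℝ (Fin K) := fderiv ℝ h e₀ with hD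
  obtain ⟨σ₀, hσ₀⟩ := (D : E →ₗ[ℝ] EuclideanSpace ℝ (Fin K)).exists_rightInverse_of_surjective
    (LinearMap.range_eq_top.2 hsurj)
  set σ : EuclideanSpace ℝ (Fin K) →L[ℝ] E := LinearMap.toContinuousLinearMap σ₀ with hσdef
  have hσ : ∀ w, D (σ w) = w := fun w => DFunLike.congr_fun hσ₀ w
  set Φ : E → E := fun e => e + σ (h e - D (e - e₀)) with hΦdef
  have hDΦ : ∀ e, D (Φ e - e₀) = h e := by
    intro e
    have h2 : Φ e - e₀ = (e - e₀) + σ (h e - D (e - e₀)) := add_sub_right_comm e _ e₀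
    rw [h2, map_add, hσ, add_comm, sub_add_cancel]
  have hΦV : ContDiffOn ℝ ∞ Φ V := by
    refine contDiffOn_id.add (σ.contDiff.comp_contDiffOn (hh.sub ?_))
    exact (D.contDiff.comp (contDiff_id.sub contDiff_const)).contDiffOn
  have hΦe₀ : Φ e₀ = e₀ := by simp [hΦdef, hz]
  have hΦat : ContDiffAt ℝ ∞ Φ e₀ := hΦV.contDiffAt (hV.mem_nhds he₀)
  have hDh : HasFDerivAt h D e₀ :=
    (((hh.contDiffAt (hV.mem_nhds he₀)).differentiableAt h0)).hasFDerivAt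
  have hinner : HasFDerivAt (fun e => D (e - e₀)) D e₀ := by
    have := D.hasFDerivAt.comp e₀ ((hasFDerivAt_id e₀).sub_const e₀)
    simp only [ContinuousLinearMap.comp_id] at this
    exact this
  have hΦ' : HasFDerivAt Φ ((ContinuousLinearEquiv.refl ℝ E : E ≃L[ℝ] E) : E →L[ℝ] E) e₀ := by
    have hB : HasFDerivAt (fun e => σ (h e - D (e - e₀))) (σ.comp (D - D)) e₀ :=
      σ.hasFDerivAt.comp e₀ (hDh.sub hinner)
    have hC : HasFDerivAt Φ (ContinuousLinearMap.id ℝ E + σ.comp (D - D)) e₀ :=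
      (hasFDerivAt_id e₀).add hB
    have heq : ((ContinuousLinearEquiv.refl ℝ E : E ≃L[ℝ] E) : E →L[ℝ] E)
        = ContinuousLinearMap.id ℝ E + σ.comp (D - D) := by
      ext x; simp
    rw [heq]; exact hC
  set P : OpenPartialHomeomorph E E := hΦat.toOpenPartialHomeomorph Φ hΦ' h0 with hPdef
  have hPcoe : (P : E → E) = Φ := rfl
  have heP : e₀ ∈ P.source := hΦat.mem_toOpenPartialHomeomorph_source hΦ' h0
  have heT : e₀ ∈ P.target := by
    have := hΦat.image_mem_toOpenPartialHomeomorph_target hΦ' h0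
    rwa [hΦe₀] at this
  have hsymm0 : P.symm e₀ = e₀ := by
    have := P.left_inv heP
    rwa [hPcoe, hΦe₀] at this
  -- the set where the derivative of Φ is invertible
  have contfd : ContinuousOn (fderiv ℝ Φ) V := hΦV.continuousOn_fderiv_of_isOpen hV h1
  set O : Set E := V ∩ (fderiv ℝ Φ) ⁻¹' {A : E →L[ℝ] E | IsUnit A} with hOdef
  have hOopen : IsOpen O := contfd.isOpen_inter_preimage hV Units.isOpen
  have he₀O : e₀ ∈ O := by
    refine ⟨he₀, ?_⟩
    have : fderiv ℝ Φ e₀ = ((ContinuousLinearEquiv.refl ℝ E : E ≃L[ℝ] E) : E →L[ℝ] E) :=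
      hΦ'.fderiv
    simp only [Set.mem_preimage, Set.mem_setOf_eq, this]
    simpa [ContinuousLinearMap.one_def] using isUnit_one (M := E →L[ℝ] E)
  set N : Set E := P.target ∩ P.symm ⁻¹' (O ∩ P.source ∩ V) with hNdef
  have hNopen : IsOpen N :=
    P.continuousOn_symm.isOpen_inter_preimage P.open_target
      ((hOopen.inter P.open_source).inter hV)
  have heN : e₀ ∈ N := by
    refine ⟨heT, ?_⟩
    rw [Set.mem_preimage, hsymm0]
    exact ⟨⟨he₀O, heP⟩, he₀⟩
  have hΨC : ∀ a ∈ N, ContDiffAt ℝ ∞ P.symm a := by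
    intro a ha
    obtain ⟨haT, haPre⟩ := ha
    obtain ⟨⟨⟨hbV, hbU⟩, hbS⟩, hbV'⟩ := haPre
    obtain ⟨u, hu⟩ := hbU
    have hd : HasFDerivAt Φ (fderiv ℝ Φ (P.symm a)) (P.symm a) :=
      ((hΦV.contDiffAt (hV.mem_nhds hbV)).differentiableAt h0).hasFDerivAt
    have hd' : HasFDerivAt (P : E → E)
        ((ContinuousLinearEquiv.ofUnit u : E ≃L[ℝ] E) : E →L[ℝ] E) (P.symm a) := by
      rw [hPcoe]
      have : ((ContinuousLinearEquiv.ofUnit u : E ≃L[ℝ] E) : E →L[ℝ] E) = fderiv ℝ Φ (P.symm a) := by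
        rw [← hu]; rfl
      rw [this]; exact hd
    have hc : ContDiffAt ℝ ∞ (P : E → E) (P.symm a) := by
      rw [hPcoe]; exact hΦV.contDiffAt (hV.mem_nhds hbV)
    exact P.contDiffAt_symm haT hd' hc
  obtain ⟨r, hr0, hball⟩ := Metric.isOpen_iff.1 hNopen e₀ heN
  set χ : ContDiffBump (0 : E) := ⟨r/4, r/2, by positivity, by linarith⟩ with hχdef
  set G : E → ℝ := fun v => χ v * f (P.symm (e₀ + v)) with hGdef
  have hmemN : ∀ v : E, ‖v‖ < r → e₀ + v ∈ N := by
    intro v hv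
    apply hball
    simp only [Metric.mem_ball, dist_eq_norm, add_sub_cancel_left]
    exact hv
  have hGsmooth : ContDiff ℝ ∞ G := by
    rw [contDiff_iff_contDiffAt]
    intro v
    by_cases hv : ‖v‖ < r
    · have hN' := hmemN v hv
      obtain ⟨hT', hPre'⟩ := hN'
      obtain ⟨⟨⟨hbV, _⟩, _⟩, hbV'⟩ := hPre'
      have hfs : ContDiffAt ℝ ∞ (f ∘ (P.symm : E → E)) (e₀ + v) :=
        ContDiffAt.comp _ (hf.contDiffAt (hV.mem_nhds hbV')) (hΨC _ (hmemN v hv))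
      have hshift : ContDiffAt ℝ ∞ ((f ∘ (P.symm : E → E)) ∘ (fun w : E => e₀ + w)) v :=
        hfs.comp v (contDiffAt_const.add contDiffAt_id)
      exact (χ.contDiff.contDiffAt).mul hshift
    · push_neg at hv
      have hvout : v ∈ (Metric.closedBall (0:E) (r/2))ᶜ := by
        simp only [Set.mem_compl_iff, Metric.mem_closedBall, dist_zero_right, not_le]
        linarith
    
      have hev : G =ᶠ[nhds v] (fun _ => (0:ℝ)) := by
        refine Filter.eventuallyEq_of_mem
          (Metric.isClosed_closedBall.isOpen_compl.mem_nhds hvout) (fun y hy => ?_)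
        have : χ y = 0 := by
          apply χ.zero_of_le_dist
          simp only [Set.mem_compl_iff, Metric.mem_closedBall, dist_zero_right, not_le] at hy
          simp only [dist_zero_right]
          linarith [show χ.rOut = r/2 from rfl]
        simp [hGdef, this]
      exact contDiffAt_const.congr_of_eventuallyEq hev
  have hhΨ : ∀ u ∈ N, h (P.symm u) = D (u - e₀) := by
    intro u hu
    have hru : P (P.symm u) = u := P.right_inv hu.1
    have := hDΦ (P.symm u)
    rw [← hPcoe, hru] at this
    exact this.symm
  have hGvan : ∀ v, D v = 0 → G v = 0 := by
    intro v hDv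
    by_cases hχv : χ v = 0
    · simp [hGdef, hχv]
    · have hvsupp : v ∈ Function.support χ := hχv
      rw [χ.support_eq] at hvsupp
      have hv : ‖v‖ < r := by
        simp only [Metric.mem_ball, dist_zero_right] at hvsupp
        linarith [show χ.rOut = r/2 from rfl]
      have hN' := hmemN v hv
      have hΨV : P.symm (e₀ + v) ∈ V := hN'.2.2
      have hzero : h (P.symm (e₀ + v)) = 0 := by
        rw [hhΨ _ hN', add_sub_cancel_left, hDv]
      have : f (P.symm (e₀ + v)) = 0 := hvan _ hΨV hzero
      simp [hGdef, this]
  obtain ⟨lam', hlam'sm, hid⟩ := hadamard_global G hGsmooth D σ hσ hGvan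
  set W : Set E := (V ∩ P.source) ∩ Φ ⁻¹' (Metric.ball e₀ (r/4)) with hWdef
  have hWopen : IsOpen W :=
    (hΦV.continuousOn.mono Set.inter_subset_left).isOpen_inter_preimage
      (hV.inter P.open_source) Metric.isOpen_ball
  have heW : e₀ ∈ W := by
    refine ⟨⟨he₀, heP⟩, ?_⟩
    simp only [Set.mem_preimage, hΦe₀, Metric.mem_ball, dist_self]
    positivity
  refine ⟨W, hWopen, heW, fun e he => he.1.1, fun S e => lam' S (Φ e - e₀), ?_, ?_⟩
  · intro S
    exact (hlam'sm S).comp_contDiffOn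
      (((hΦV.mono (fun e he => he.1.1)).sub contDiffOn_const))
  · intro e he
    obtain ⟨⟨heV, hePs⟩, heB⟩ := he
    set v : E := Φ e - e₀ with hvdef
    have hvn : ‖v‖ < r/4 := by
      simpa [hvdef, dist_eq_norm] using heB
    have hχ1 : χ v = 1 := χ.one_of_mem_closedBall
      (by simp only [Metric.mem_closedBall, dist_zero_right]; linarith [show χ.rIn = r/4 from rfl])
    have he₀v : e₀ + v = Φ e := by rw [hvdef]; abel
    have hGv : G v = f e := by
      rw [hGdef]
      simp only [hχ1, one_mul, he₀v, ← hPcoe, P.left_inv hePs]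
    have hDv : ∀ S, D v S = h e S := by
      intro S
      rw [hvdef, hDΦ e]
    have := hid v
    rw [hGv] at this
    rw [this]
    exact Finset.sum_congr rfl fun S _ => by rw [hDv S, mul_comm]

end ParInt
section ManifoldPart

variable {EM : Type} [NormedAddCommGroup EM] [NormedSpace ℝ EM] [FiniteDimensional ℝ EM]
  {HM : Type} [TopologicalSpace HM] {IM : ModelWithCorners ℝ EM HM} [IM.Boundaryless]
  {M : Type} [TopologicalSpace M] [ChartedSpace HM M] [IsManifold IM (⊤ : ℕ∞) M]

lemma keyLocal {K : ℕ} {H : M → EuclideanSpace ℝ (Fin K)} (hH : ContMDiff IM (𝓡 K) ∞ H)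
    (hHrank : ∀ x : M, H x = 0 → Surjective (mfderiv IM (𝓡 K) H x))
    {f : M → ℝ} (hf : ContMDiff IM 𝓘(ℝ, ℝ) ∞ f)
    (hvan : ∀ x : M, H x = 0 → f x = 0) (x₀ : M) :
    ∃ U : Set M, IsOpen U ∧ x₀ ∈ U ∧ ∃ lam : Fin K → M → ℝ,
      (∀ S, ContMDiffOn IM 𝓘(ℝ, ℝ) ∞ (lam S) U) ∧
      ∀ x ∈ U, f x = ∑ S : Fin K, lam S x * H x S := by
  classical
  by_cases hx0 : H x₀ = 0
  · -- hard case : zero of H, use the chart and keyEuclid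
    set φ := extChartAt IM x₀ with hφdef
    set V : Set EM := φ.target with hVdef
    have hVopen : IsOpen V := isOpen_extChartAt_target x₀
    set e₀ : EM := φ x₀ with he₀def
    have he₀V : e₀ ∈ V := mem_extChartAt_target x₀
    set h : EM → EuclideanSpace ℝ (Fin K) := H ∘ φ.symm with hhdef
    set fE : EM → ℝ := f ∘ φ.symm with hfEdef
    have hsymmOn : ContMDiffOn 𝓘(ℝ, EM) IM ∞ φ.symm V := contMDiffOn_extChartAt_symm x₀
    have hh : ContDiffOn ℝ ∞ h V :=
      (((hH.contMDiffOn (s := Set.univ)).comp hsymmOn (by simp))).contDiffOn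
    have hfE : ContDiffOn ℝ ∞ fE V :=
      (((hf.contMDiffOn (s := Set.univ)).comp hsymmOn (by simp))).contDiffOn
    have hz : h e₀ = 0 := by
      have h2 : h e₀ = H ((extChartAt IM x₀).symm ((extChartAt IM x₀) x₀)) := rfl
      rw [h2, extChartAt_to_inv]
      exact hx0
    have hφx₀ : φ.symm e₀ = x₀ := extChartAt_to_inv x₀
    -- surjectivity of the chart representative
    have hsurj : Surjective (fderiv ℝ h e₀) := by
      have hmd_h : MDifferentiableAt 𝓘(ℝ, EM) (𝓡 K) h e₀ :=
        ((contMDiffAt_iff_contDiffAt).2 (hh.contDiffAt (hVopen.mem_nhds he₀V))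
          : ContMDiffAt 𝓘(ℝ, EM) (𝓡 K) ∞ h e₀).mdifferentiableAt (by simp)
      have hmd_φ : MDifferentiableAt IM 𝓘(ℝ, EM) φ x₀ :=
        mdifferentiableAt_extChartAt (I := IM) (x := x₀) (mem_chart_source HM x₀)
      have hev : H =ᶠ[nhds x₀] (h ∘ φ) := by
        refine Filter.eventuallyEq_of_mem (extChartAt_source_mem_nhds (I := IM) x₀) (fun y hy => ?_)
        simp only [Function.comp_apply, hhdef]
        rw [PartialEquiv.left_inv _ hy]
      have hcomp : mfderiv IM (𝓡 K) H x₀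
          = (mfderiv 𝓘(ℝ, EM) (𝓡 K) h e₀).comp (mfderiv IM 𝓘(ℝ, EM) φ x₀) := by
        rw [hev.mfderiv_eq]
        exact mfderiv_comp x₀ hmd_h hmd_φ
      have hS := hHrank x₀ hx0
      rw [hcomp] at hS
      have hS2 : Surjective (⇑(mfderiv 𝓘(ℝ, EM) (𝓡 K) h e₀)
          ∘ ⇑(mfderiv IM 𝓘(ℝ, EM) φ x₀)) := by
        rw [← ContinuousLinearMap.coe_comp']
        exact hS
      have : Surjective (mfderiv 𝓘(ℝ, EM) (𝓡 K) h e₀) := hS2.of_comp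
      rwa [mfderiv_eq_fderiv] at this
    have hvanE : ∀ e ∈ V, h e = 0 → fE e = 0 := fun e _ hze => hvan _ hze
    obtain ⟨W, hWopen, heW, hWV, lam', hlamsm', hlameq'⟩ :=
      keyEuclid hVopen hh hfE he₀V hz hsurj hvanE
    set U : Set M := φ.source ∩ φ ⁻¹' W with hUdef
    have hUopen : IsOpen U := by
      have hco : ContinuousOn φ φ.source := by
        rw [hφdef]
        exact continuousOn_extChartAt x₀
      exact hco.isOpen_inter_preimage (isOpen_extChartAt_source x₀) hWopen
    have hx₀U : x₀ ∈ U := ⟨mem_extChartAt_source x₀, by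
      simp only [Set.mem_preimage]; exact heW⟩
    refine ⟨U, hUopen, hx₀U, fun S x => lam' S (φ x), ?_, ?_⟩
    · intro S
      have hφOn : ContMDiffOn IM 𝓘(ℝ, EM) ∞ φ φ.source := by
        rw [hφdef, extChartAt_source]
        exact contMDiffOn_extChartAt
      exact ((hlamsm' S).contMDiffOn).comp (hφOn.mono Set.inter_subset_left)
        (fun x hx => hx.2)
    · intro x hx
      have hback : φ.symm (φ x) = x := PartialEquiv.left_inv _ hx.1
      have := hlameq' (φ x) hx.2
      rw [hhdef, hfEdef] at this
      simp only [Function.comp_apply, hback] at this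
      exact this
  · -- easy case : H x₀ ≠ 0, divide by |H|²
    set Q : M → ℝ := fun x => ∑ S : Fin K, H x S * H x S with hQdef
    have hQsm : ContMDiff IM 𝓘(ℝ, ℝ) ∞ Q := by
      have houter : ContDiff ℝ ∞ (fun w : EuclideanSpace ℝ (Fin K) =>
          ∑ S : Fin K, w S * w S) :=
        ContDiff.sum fun S _ =>
          ((EuclideanSpace.proj (𝕜 := ℝ) S).contDiff).mul ((EuclideanSpace.proj (𝕜 := ℝ) S).contDiff)
      exact (houter.contMDiff).comp hH
    have hcomp : ∀ S : Fin K, ContMDiff IM 𝓘(ℝ, ℝ) ∞ (fun x => H x S) := fun S =>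
      (((EuclideanSpace.proj (𝕜 := ℝ) S).contMDiff).comp hH :
        ContMDiff IM 𝓘(ℝ, ℝ) ∞ ((EuclideanSpace.proj (𝕜 := ℝ) S) ∘ H))
    set U : Set M := Q ⁻¹' {(0:ℝ)}ᶜ with hUdef
    have hUopen : IsOpen U := hQsm.continuous.isOpen_preimage _ isOpen_compl_singleton
    have hQx : ∀ x ∈ U, Q x ≠ 0 := fun x hx => hx
    have hx₀U : x₀ ∈ U := by
      simp only [hUdef, Set.mem_preimage, Set.mem_compl_iff, Set.mem_singleton_iff]
      intro hQ0
      apply hx0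
      have hnn : ∀ S ∈ Finset.univ, (0:ℝ) ≤ H x₀ S * H x₀ S := fun S _ => mul_self_nonneg _
      have := (Finset.sum_eq_zero_iff_of_nonneg hnn).1 hQ0
      ext S
      exact mul_self_eq_zero.1 (this S (Finset.mem_univ S))
    refine ⟨U, hUopen, hx₀U, fun S x => f x * H x S / Q x, ?_, ?_⟩
    · intro S
      exact ((hf.contMDiffOn.mul (hcomp S).contMDiffOn)).div₀ hQsm.contMDiffOn hQx
    · intro x hx
      have hQne := hQx x hx
      have hterm : ∀ S : Fin K, f x * H x S / Q x * H x S
          = f x / Q x * (H x S * H x S) := fun S => by ring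
      rw [Finset.sum_congr rfl fun S _ => hterm S, ← Finset.mul_sum]
      have hQxx : Q x = ∑ S : Fin K, H x S * H x S := rfl
      rw [← hQxx, div_mul_cancel₀ _ hQne]



lemma keyA [T2Space M] [SecondCountableTopology M] {K : ℕ}
    {H : M → EuclideanSpace ℝ (Fin K)} (hH : ContMDiff IM (𝓡 K) ∞ H)
    (hHrank : ∀ x : M, H x = 0 → Surjective (mfderiv IM (𝓡 K) H x))
    {f : M → ℝ} (hf : ContMDiff IM 𝓘(ℝ, ℝ) ∞ f)
    (hvan : ∀ x : M, H x = 0 → f x = 0) :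
    ∃ lam : Fin K → M → ℝ, (∀ S, ContMDiff IM 𝓘(ℝ, ℝ) ∞ (lam S)) ∧
      ∀ x, f x = ∑ S : Fin K, lam S x * H x S := by
  classical
  choose U hUo hUx lam hlamsm hlameq using keyLocal hH hHrank hf hvan
  haveI : LocallyCompactSpace HM := IM.locallyCompactSpace
  haveI : LocallyCompactSpace M := ChartedSpace.locallyCompactSpace HM M
  haveI : SigmaCompactSpace M :=
    sigmaCompactSpace_of_locallyCompact_secondCountable
  obtain ⟨ρ, hρ⟩ := SmoothPartitionOfUnity.exists_isSubordinate (I := IM)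
    isClosed_univ U hUo (fun x _ => Set.mem_iUnion.2 ⟨x, hUx x⟩)
  refine ⟨fun S x => ∑ᶠ i, ρ i x • lam i S x, ?_, ?_⟩
  · intro S
    exact hρ.contMDiff_finsum_smul hUo (fun i => hlamsm i S)
  · intro x
    have hfin : {i : M | x ∈ Function.support fun y => ρ i y}.Finite :=
      ρ.locallyFinite.point_finite x
    set F : Finset M := hfin.toFinset with hFdef
    have hsub : ∀ (g : M → M → ℝ), (Function.support fun i => ρ i x • g i x) ⊆ ↑F := by
      intro g i hi
      have hne : ρ i x ≠ 0 := fun h0 => hi (by simp [h0])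
      simp only [hFdef, Set.Finite.coe_toFinset, Set.mem_setOf_eq, Function.mem_support]
      exact hne
    have hstep1 : ∀ S : Fin K, (∑ᶠ i, ρ i x • lam i S x) = ∑ i ∈ F, ρ i x • lam i S x :=
      fun S => finsum_eq_finset_sum_of_support_subset _ (hsub (fun i y => lam i S y))
    have hρ1 : (∑ i ∈ F, ρ i x) = 1 := by
      rw [← finsum_eq_finset_sum_of_support_subset (fun i => ρ i x) ?_]
      · exact ρ.sum_eq_one (Set.mem_univ x)
      · intro i hi
        simp only [hFdef, Set.Finite.coe_toFinset, Set.mem_setOf_eq, Function.mem_support]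
        exact hi
    calc f x = (∑ i ∈ F, ρ i x) * f x := by rw [hρ1, one_mul]
      _ = ∑ i ∈ F, ρ i x * f x := by rw [Finset.sum_mul]
      _ = ∑ i ∈ F, ρ i x * ∑ S : Fin K, lam i S x * H x S := by
          refine Finset.sum_congr rfl fun i hi => ?_
          by_cases hρi : ρ i x = 0
          · rw [hρi, zero_mul, zero_mul]
          · have hxU : x ∈ U i := hρ i (subset_closure hρi)
            rw [hlameq i x hxU]
      _ = ∑ i ∈ F, ∑ S : Fin K, (ρ i x • lam i S x) * H x S := by
          refine Finset.sum_congr rfl fun i _ => ?_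
          rw [Finset.mul_sum]
          exact Finset.sum_congr rfl fun S _ => by rw [smul_eq_mul]; ring
      _ = ∑ S : Fin K, (∑ i ∈ F, ρ i x • lam i S x) * H x S := by
          rw [Finset.sum_comm]
          exact Finset.sum_congr rfl fun S _ => by rw [Finset.sum_mul]
      _ = ∑ S : Fin K, (∑ᶠ i, ρ i x • lam i S x) * H x S :=
          Finset.sum_congr rfl fun S _ => by rw [hstep1 S]
end ManifoldPart

end AuxiliaryLemmas

/-- Proposition 4.4 of the paper.  For a smooth fiber bundle projection `π : M → B` and
smooth maps `H : M → ℝ^K`, `g : B → ℝ^k` of maximal rank on their zero sets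
`M_H = {H = 0}` and `B_g = {g = 0}`:  the system `H = 0` is foliated over the base system
`g = 0` (i.e. `π(M_H) = B_g`) iff (i) the pullback of `g = 0` under `π` is a consequence
of `H = 0` (`g^s ∘ π = Σ_S Λ^{sS} H^S` with smooth `Λ^{sS}`) and (ii) every solution of
`g = 0` lifts to a solution of `H = 0`. -/
theorem foliated_iff_consequence_and_lifting
    {EM : Type} [NormedAddCommGroup EM] [NormedSpace ℝ EM] [FiniteDimensional ℝ EM]
    {HM : Type} [TopologicalSpace HM] (IM : ModelWithCorners ℝ EM HM) [IM.Boundaryless]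
    {M : Type} [TopologicalSpace M] [ChartedSpace HM M] [IsManifold IM (⊤ : ℕ∞) M]
    [T2Space M] [SecondCountableTopology M]
    {EB : Type} [NormedAddCommGroup EB] [NormedSpace ℝ EB] [FiniteDimensional ℝ EB]
    {HB : Type} [TopologicalSpace HB] (IB : ModelWithCorners ℝ EB HB) [IB.Boundaryless]
    {B : Type} [TopologicalSpace B] [ChartedSpace HB B] [IsManifold IB (⊤ : ℕ∞) B]
    [T2Space B] [SecondCountableTopology B]
    (F : Type) [TopologicalSpace F]
    (π : M → B) (hπ : ContMDiff IM IB (⊤ : ℕ∞) π)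
    (hbundle : ∀ y : B, ∃ e : Bundle.Trivialization F π, y ∈ e.baseSet)
    (k K : ℕ)
    (H : M → EuclideanSpace ℝ (Fin K)) (hH : ContMDiff IM (𝓡 K) (⊤ : ℕ∞) H)
    (g : B → EuclideanSpace ℝ (Fin k)) (hg : ContMDiff IB (𝓡 k) (⊤ : ℕ∞) g)
    (hHrank : ∀ x : M, H x = 0 → Surjective (mfderiv IM (𝓡 K) H x))
    (hgrank : ∀ y : B, g y = 0 → Surjective (mfderiv IB (𝓡 k) g y)) :
    π '' {x : M | H x = 0} = {y : B | g y = 0} ↔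
    ((∃ Λ : Fin k → Fin K → M → ℝ,
        (∀ s S, ContMDiff IM 𝓘(ℝ, ℝ) (⊤ : ℕ∞) (Λ s S)) ∧
        ∀ (x : M) (s : Fin k), g (π x) s = ∑ S : Fin K, Λ s S x * H x S) ∧
      (∀ y : B, g y = 0 → ∃ x : M, H x = 0 ∧ π x = y)) := by
  constructor
  · intro hset
    constructor
    · have hvan : ∀ s : Fin k, ∀ x : M, H x = 0 → g (π x) s = 0 := by
        intro s x hx
        have hmem : π x ∈ {y : B | g y = 0} := by
          rw [← hset]; exact ⟨x, hx, rfl⟩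
        rw [Set.mem_setOf_eq] at hmem
        rw [hmem]
        rfl
      have hfs : ∀ s : Fin k, ContMDiff IM 𝓘(ℝ, ℝ) ∞ (fun x => g (π x) s) := fun s =>
        (((EuclideanSpace.proj (𝕜 := ℝ) s).contMDiff).comp (hg.comp hπ) :
          ContMDiff IM 𝓘(ℝ, ℝ) ∞ ((EuclideanSpace.proj (𝕜 := ℝ) s) ∘ (g ∘ π)))
      choose lam hsm heq using fun s : Fin k => keyA hH hHrank (hfs s) (hvan s)
      exact ⟨lam, hsm, fun x s => heq s x⟩
    · intro y hy
      have : y ∈ π '' {x : M | H x = 0} := by rw [hset]; exact hy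
      obtain ⟨x, hx1, hx2⟩ := this
      exact ⟨x, hx1, hx2⟩
  · rintro ⟨⟨Λ, hΛsm, hΛeq⟩, hlift⟩
    ext y
    simp only [Set.mem_image, Set.mem_setOf_eq]
    constructor
    · rintro ⟨x, hx, rfl⟩
      have hcomp : ∀ s : Fin k, g (π x) s = 0 := by
        intro s
        rw [hΛeq x s]
        apply Finset.sum_eq_zero
        intro S _
        rw [hx]
        simp
      ext s
      simpa using hcomp s
    · intro hy
      obtain ⟨x, hx1, hx2⟩ := hlift y hy
      exact ⟨x, hx1, hx2⟩
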